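/- Let v be a point in the Euclidean plane, let ι be a finite index type, and let a, b : ι → ℝ² be such that for every i the points v, a i, b i are affinely independent, and for all i ≠ j the interiors of the triangles convexHull{v, a i, b i} and convexHull{v, a j, b j} are disjoint. Then the sum over i of the angles ∠ (a i) v (b i) is at most 2π. -/

import Mathlib

open EuclideanGeometry Set MeasureTheory Complex

lemma trig_id (δ x : ℝ) : (Real.sin (δ - x) : ℂ) + Real.sin x * Complex.exp (δ * Complex.I)
    = Real.sin δ * Complex.exp (x * Complex.I) := by
  rw [Complex.exp_mul_I, Complex.exp_mul_I, Real.sin_sub]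
  push_cast
  ring


lemma mem_interior_hull {A B : ℂ} (hAB : AffineIndependent ℝ ![0, A, B]) {s t : ℝ}
    (hs : 0 < s) (ht : 0 < t) (hst : s + t < 1) :
    s • A + t • B ∈ interior (convexHull ℝ ({0, A, B} : Set ℂ)) := by
  have htot : affineSpan ℝ (Set.range ![0, A, B]) = ⊤ := by
    rw [hAB.affineSpan_eq_top_iff_card_eq_finrank_add_one]
    simp [Complex.finrank_real_complex]
  let bas : AffineBasis (Fin 3) ℝ ℂ := ⟨![0, A, B], hAB, htot⟩
  have hrange : Set.range ![0, A, B] = ({0, A, B} : Set ℂ) := by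
    simp only [Set.ext_iff, Matrix.range_cons, Matrix.range_empty, Set.mem_insert_iff,
      Set.union_empty, Set.union_singleton, Set.mem_singleton_iff, Set.mem_union, Set.singleton_union]
    intro x; tauto
  have hi := bas.interior_convexHull
  rw [show Set.range bas = Set.range ![0, A, B] from rfl, hrange] at hi
  rw [hi]
  intro i
  have hw1 : ∑ j, (![1 - s - t, s, t] : Fin 3 → ℝ) j = 1 := by
    simp [Fin.sum_univ_three]; ring
  have hcomb : (Finset.univ.affineCombination ℝ ![0, A, B] ![1 - s - t, s, t]) = s • A + t • B := by
    rw [Finset.univ.affineCombination_eq_linear_combination _ _ hw1]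
    simp [Fin.sum_univ_three]
  rw [← hcomb]
  have := bas.coord_apply_combination_of_mem (Finset.mem_univ i) hw1
  rw [show ⇑bas = ![0, A, B] from rfl] at this
  rw [this]
  fin_cases i <;> simp <;> [linarith; exact hs; exact ht]

lemma my_angle_eq_abs_arg {A B : ℂ} (hA : A ≠ 0) (hB : B ≠ 0) :
    InnerProductGeometry.angle A B = |Complex.arg (B / A)| := by
  have hcos : Real.cos (Complex.arg (B/A)) = (inner ℝ A B : ℝ) / (‖A‖ * ‖B‖) := by
    have key : (starRingEnd ℂ) A * B = (B / A) * ((‖A‖ : ℂ))^2 := by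
      field_simp
      rw [mul_comm]
      exact_mod_cast RCLike.mul_conj A
    rw [Complex.cos_arg (div_ne_zero hB hA), Complex.inner, mul_comm B, key, ← Complex.ofReal_pow,
      Complex.mul_re, Complex.ofReal_re, Complex.ofReal_im, norm_div]
    have h1 : ‖A‖ ≠ 0 := by simpa using hA
    have h2 : ‖B‖ ≠ 0 := by simpa using hB
    field_simp
    ring
  rw [InnerProductGeometry.angle, ← hcos, ← Real.cos_abs, Real.arccos_cos (abs_nonneg _)
    (abs_arg_le_pi _)]

lemma cone_mem {A B : ℂ} (hA : A ≠ 0) (hB : B ≠ 0) (hδ0 : Complex.arg (B/A) ≠ 0)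
    (hδπ : Complex.arg (B/A) ≠ Real.pi) {xx : ℝ}
    (hxx : |xx - Complex.arg (B/A) / 2| < |Complex.arg (B/A)| / 2) :
    ∃ s t : ℝ, 0 < s ∧ 0 < t ∧
      s • A + t • B = Complex.exp ((Complex.arg A + xx) * Complex.I) := by
  set δ := Complex.arg (B/A) with hδ
  set c := Complex.arg A with hc
  have hδlt : δ < Real.pi := lt_of_le_of_ne (Complex.arg_le_pi _) hδπ
  have hδgt : -Real.pi < δ := Complex.neg_pi_lt_arg _
  have hsinδ : Real.sin δ ≠ 0 := by
    intro h; exact hδ0 ((Real.sin_eq_zero_iff_of_lt_of_lt hδgt hδlt).mp h)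
  have habsA : 0 < ‖A‖ := norm_pos_iff.mpr hA
  have habsB : 0 < ‖B‖ := norm_pos_iff.mpr hB
  have hxpos : 0 < Real.sin xx / Real.sin δ ∧ 0 < Real.sin (δ - xx) / Real.sin δ := by
    rcases lt_or_gt_of_ne hδ0 with hneg | hpos
    · rw [abs_of_neg hneg] at hxx
      rw [abs_lt] at hxx
      have h1 : δ < xx := by linarith
      have h2 : xx < 0 := by linarith
      have hsx : Real.sin xx < 0 := Real.sin_neg_of_neg_of_neg_pi_lt h2 (by linarith)
      have hsd : Real.sin δ < 0 := Real.sin_neg_of_neg_of_neg_pi_lt hneg hδgt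
      have hsdx : Real.sin (δ - xx) < 0 :=
        Real.sin_neg_of_neg_of_neg_pi_lt (by linarith) (by linarith)
      exact ⟨div_pos_of_neg_of_neg hsx hsd, div_pos_of_neg_of_neg hsdx hsd⟩
    · rw [abs_of_pos hpos] at hxx
      rw [abs_lt] at hxx
      have h1 : 0 < xx := by linarith
      have h2 : xx < δ := by linarith
      have hsx : 0 < Real.sin xx := Real.sin_pos_of_pos_of_lt_pi h1 (by linarith)
      have hsd : 0 < Real.sin δ := Real.sin_pos_of_pos_of_lt_pi hpos hδlt
      have hsdx : 0 < Real.sin (δ - xx) :=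
        Real.sin_pos_of_pos_of_lt_pi (by linarith) (by linarith)
      exact ⟨div_pos hsx hsd, div_pos hsdx hsd⟩
  refine ⟨Real.sin (δ - xx) / Real.sin δ / ‖A‖,
    Real.sin xx / Real.sin δ / ‖B‖, ?_, ?_, ?_⟩
  · exact div_pos hxpos.2 habsA
  · exact div_pos hxpos.1 habsB
  · have hAe : ((‖A‖ : ℂ)) * Complex.exp (c * Complex.I) = A :=
      Complex.norm_mul_exp_arg_mul_I A
    have hBe : B = (‖B‖ : ℂ) * (Complex.exp (δ * Complex.I) *
        Complex.exp (c * Complex.I)) := by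
      have h1 := Complex.norm_mul_exp_arg_mul_I (B/A)
      rw [← hδ, norm_div] at h1
      have h2 : B = (B / A) * A := by field_simp
      have : (‖A‖ : ℂ) ≠ 0 := by
        exact_mod_cast ne_of_gt (norm_pos_iff.mpr hA)
      calc B = (B / A) * A := h2
        _ = ((‖B‖ / ‖A‖ : ℝ) : ℂ) * Complex.exp (δ * Complex.I) *
            ((‖A‖ : ℂ) * Complex.exp (c * Complex.I)) := by rw [h1, hAe]
        _ = _ := by push_cast; field_simp
    have hexp : Complex.exp ((c + xx) * Complex.I)
        = Complex.exp (c * Complex.I) * Complex.exp (xx * Complex.I) := by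
      rw [← Complex.exp_add]; ring_nf
    have key := trig_id δ xx
    set ra := ‖A‖ with hra
    set rb := ‖B‖ with hrb
    have hraC : ((ra : ℝ) : ℂ) ≠ 0 := by exact_mod_cast ne_of_gt habsA
    have hrbC : ((rb : ℝ) : ℂ) ≠ 0 := by exact_mod_cast ne_of_gt habsB
    have hsC : ((Real.sin δ : ℝ) : ℂ) ≠ 0 := by exact_mod_cast hsinδ
    rw [hexp, Complex.real_smul, Complex.real_smul, hBe, ← hAe]
    simp only [Complex.ofReal_div]
    set P := (Real.sin (δ - xx) : ℂ)
    set Q := (Real.sin xx : ℂ)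
    set S := (Real.sin δ : ℂ)
    set EA := Complex.exp (c * Complex.I)
    set ED := Complex.exp (δ * Complex.I)
    set EX := Complex.exp (xx * Complex.I)
    rw [show P / S / ↑ra * (↑ra * EA) = EA * P / S by field_simp,
      show Q / S / ↑rb * (↑rb * (ED * EA)) = EA * Q * ED / S by field_simp]
    rw [← add_div, div_eq_iff hsC]
    linear_combination EA * key

instance fact_two_pi_pos : Fact (0 < 2 * Real.pi) := ⟨by positivity⟩

lemma key_lemma {A B : ℂ} (hAB : AffineIndependent ℝ ![(0:ℂ), A, B]) :
    ∃ D : Set (AddCircle (2 * Real.pi)), MeasurableSet D ∧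
      ENNReal.ofReal (InnerProductGeometry.angle A B) ≤ volume D ∧
      ∀ x ∈ D, ∀ φ : ℝ, (φ : AddCircle (2 * Real.pi)) = x →
        ∃ ε : ℝ, 0 < ε ∧
          ε • Complex.exp (φ * Complex.I) ∈ interior (convexHull ℝ ({0, A, B} : Set ℂ)) := by
  haveI : Fact (0 < 2 * Real.pi) := ⟨by positivity⟩
  -- basic facts
  have hA : A ≠ 0 := by
    intro h
    have := hAB.injective (show ![(0:ℂ), A, B] 1 = ![(0:ℂ), A, B] 0 by simp [h])
    simp at this
  have hBr : ∀ r : ℝ, B ≠ r • A := by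
    intro r h
    rw [affineIndependent_iff] at hAB
    have := hAB Finset.univ ![r - 1, -r, 1] (by simp [Fin.sum_univ_three]; ring)
      (by simp [Fin.sum_univ_three, h]) 2 (Finset.mem_univ _)
    simp at this
  have hB : B ≠ 0 := by intro h; exact hBr 0 (by simp [h])
  set δ := Complex.arg (B / A) with hδ
  set c := Complex.arg A with hc
  have him : (B / A).im = 0 → False := by
    intro h
    have h2 : (B / A) = ((B / A).re : ℂ) := Complex.ext rfl (by simp [h])
    apply hBr (B / A).re
    rw [Complex.real_smul, ← h2]
    field_simp
  have hδ0 : δ ≠ 0 := by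
    intro h
    exact him (Complex.arg_eq_zero_iff.mp h).2
  have hδπ : δ ≠ Real.pi := by
    intro h
    exact him (Complex.arg_eq_pi_iff.mp h).2
  have hδlt : |δ| < Real.pi := by
    rcases lt_or_eq_of_le (Complex.abs_arg_le_pi (B / A)) with h | h
    · exact h
    · exfalso
      rcases abs_eq (le_of_lt Real.pi_pos) |>.mp h with h | h
      · exact hδπ h
      · exact absurd (h ▸ Complex.neg_pi_lt_arg (B / A)) (lt_irrefl _)
  have hδpos : 0 < |δ| := abs_pos.mpr hδ0
  set m := c + δ / 2 with hm
  refine ⟨Metric.ball ((m : ℝ) : AddCircle (2 * Real.pi)) (|δ| / 2),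
    measurableSet_ball, ?_, ?_⟩
  · -- measure bound
    rw [my_angle_eq_abs_arg hA hB, ← hδ]
    have hsingle : ∀ p : AddCircle (2 * Real.pi), volume ({p} : Set (AddCircle (2 * Real.pi))) = 0 := by
      intro p
      rw [← Metric.closedBall_zero, AddCircle.volume_closedBall]
      simp [Real.pi_pos.le]
    have hsub : Metric.closedBall ((m : ℝ) : AddCircle (2 * Real.pi)) (|δ| / 2) ⊆
        Metric.ball ((m : ℝ) : AddCircle (2 * Real.pi)) (|δ| / 2) ∪
        ({((m + |δ| / 2 : ℝ) : AddCircle (2 * Real.pi))} ∪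
          {((m - |δ| / 2 : ℝ) : AddCircle (2 * Real.pi))}) := by
      intro x hx
      rcases lt_or_eq_of_le (Metric.mem_closedBall.mp hx) with h | h
      · exact Or.inl (Metric.mem_ball.mpr h)
      · right
        obtain ⟨φ, rfl⟩ := QuotientAddGroup.mk_surjective x
        rw [dist_eq_norm, ← AddCircle.coe_sub, AddCircle.norm_eq] at h
        set k := round ((2 * Real.pi)⁻¹ * (φ - m)) with hk
        have hval : φ - m - k * (2 * Real.pi) = |δ| / 2 ∨
            φ - m - k * (2 * Real.pi) = -(|δ| / 2) := abs_eq (by positivity) |>.mp h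
        have hcoe : ∀ y : ℝ, ((φ : AddCircle (2 * Real.pi)) = ((y : ℝ) : AddCircle (2 * Real.pi)))
            ↔ φ - y ∈ AddSubgroup.zmultiples (2 * Real.pi) := by
          intro y
          rw [← QuotientAddGroup.eq_iff_sub_mem]
        rcases hval with h' | h'
        · exact Or.inl ((hcoe _).mpr (AddSubgroup.mem_zmultiples_iff.mpr
            ⟨k, by rw [zsmul_eq_mul]; linarith⟩))
        · exact Or.inr ((hcoe _).mpr (AddSubgroup.mem_zmultiples_iff.mpr
            ⟨k, by rw [zsmul_eq_mul]; linarith⟩))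
    have h1 := measure_mono (μ := (volume : Measure (AddCircle (2 * Real.pi)))) hsub
    rw [AddCircle.volume_closedBall] at h1
    have h2 : min (2 * Real.pi) (2 * (|δ| / 2)) = |δ| := by
      rw [min_eq_right]; · ring
      · linarith
    rw [h2] at h1
    calc ENNReal.ofReal |δ| ≤ _ := h1
      _ ≤ volume (Metric.ball ((m : ℝ) : AddCircle (2 * Real.pi)) (|δ| / 2)) + 0 := by
        refine le_trans (measure_union_le _ _) ?_
        gcongr
        refine le_trans (measure_union_le _ _) ?_
        simp [hsingle]
      _ = _ := by simp
  · -- ray property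
    intro x hx φ hφ
    rw [← hφ] at hx
    rw [Metric.mem_ball, dist_eq_norm, ← AddCircle.coe_sub, AddCircle.norm_eq] at hx
    set k := round ((2 * Real.pi)⁻¹ * (φ - m)) with hk
    set xx := φ - k * (2 * Real.pi) - c with hxx
    have hx' : |xx - δ / 2| < |δ| / 2 := by
      have : φ - m - k * (2 * Real.pi) = xx - δ / 2 := by rw [hxx, hm]; ring
      rwa [this] at hx
    obtain ⟨s, t, hs, ht, heq⟩ := cone_mem hA hB hδ0 hδπ hx'
    have hexp : Complex.exp (φ * Complex.I) = Complex.exp ((c + xx) * Complex.I) := by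
      have : (φ : ℂ) = (c + xx) + (k : ℤ) * (2 * Real.pi) := by
        push_cast [hxx]; ring
      rw [this, add_mul, Complex.exp_add]
      have h4 : ((k:ℂ) * (2 * Real.pi)) * Complex.I = (k:ℂ) * (2 * Real.pi * Complex.I) := by ring
      rw [h4, Complex.exp_int_mul_two_pi_mul_I, mul_one]
    refine ⟨1 / (2 * (s + t)), by positivity, ?_⟩
    have h3 : (1 / (2 * (s + t))) • Complex.exp (φ * Complex.I)
        = ((1 / (2 * (s + t))) * s) • A + ((1 / (2 * (s + t))) * t) • B := by
      rw [hexp, ← heq, smul_add, smul_smul, smul_smul]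
    rw [h3]
    refine mem_interior_hull hAB (by positivity) (by positivity) ?_
    have hst : 0 < s + t := by linarith
    rw [← mul_add]
    rw [div_mul_eq_mul_div, one_mul, div_lt_one (by positivity)]
    linarith

lemma scale_mem_interior {S : Set ℂ} (hS : Convex ℝ S) (h0S : (0:ℂ) ∈ S)
    {z : ℂ} {ε₀ ε : ℝ} (h0 : 0 < ε) (hle : ε ≤ ε₀) (hz : ε₀ • z ∈ interior S) :
    ε • z ∈ interior S := by
  rcases eq_or_lt_of_le hle with rfl | hlt
  · exact hz
  · have hε₀ : 0 < ε₀ := lt_trans h0 hlt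
    have : ε • z ∈ openSegment ℝ (0:ℂ) (ε₀ • z) := by
      refine ⟨1 - ε / ε₀, ε / ε₀, ?_, ?_, ?_, ?_⟩
      · have : ε / ε₀ < 1 := (div_lt_one hε₀).mpr hlt
        linarith
      · positivity
      · ring
      · rw [smul_zero, zero_add, smul_smul, div_mul_cancel₀ _ (ne_of_gt hε₀)]
    exact hS.openSegment_self_interior_subset_interior h0S hz this


theorem stmt_12 (v : EuclideanSpace ℝ (Fin 2)) (ι : Type*) [Fintype ι]
    (a b : ι → EuclideanSpace ℝ (Fin 2))
    (hindep : ∀ i, AffineIndependent ℝ ![v, a i, b i])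
    (hdisj : ∀ i j, i ≠ j →
      Disjoint
        (interior (convexHull ℝ ({v, a i, b i} : Set (EuclideanSpace ℝ (Fin 2)))))
        (interior (convexHull ℝ ({v, a j, b j} : Set (EuclideanSpace ℝ (Fin 2)))))) :
    ∑ i, ∠ (a i) v (b i) ≤ 2 * Real.pi := by
  classical
  let f : EuclideanSpace ℝ (Fin 2) ≃ₗᵢ[ℝ] ℂ := Complex.orthonormalBasisOneI.repr.symm
  let G : EuclideanSpace ℝ (Fin 2) →ᵃ[ℝ] ℂ :=
    (AffineEquiv.constVAdd ℝ ℂ (-(f v))).toAffineMap.comp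
      f.toLinearEquiv.toLinearMap.toAffineMap
  have hGdef : ∀ x, G x = -(f v) + f x := fun x => rfl
  have hGinj : Function.Injective G := by
    intro x y h
    rw [hGdef, hGdef] at h
    exact f.injective (add_left_cancel h)
  let H : EuclideanSpace ℝ (Fin 2) ≃ₜ ℂ :=
    f.toHomeomorph.trans (Homeomorph.addLeft (-(f v)))
  have hHG : ∀ x, H x = G x := fun x => rfl
  set A : ι → ℂ := fun i => G (a i) with hA
  set B : ι → ℂ := fun i => G (b i) with hB
  -- affine independence in ℂ
  have hind' : ∀ i, AffineIndependent ℝ ![(0:ℂ), A i, B i] := by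
    intro i
    have h1 := (hindep i).map' G hGinj
    have h2 : G ∘ ![v, a i, b i] = ![(0:ℂ), A i, B i] := by
      funext j
      fin_cases j <;> simp [hGdef, hA, hB]
    rwa [h2] at h1
  -- interiors in ℂ
  set T : ι → Set ℂ := fun i => interior (convexHull ℝ ({0, A i, B i} : Set ℂ)) with hT
  have hTim : ∀ i, T i = H '' interior (convexHull ℝ
      ({v, a i, b i} : Set (EuclideanSpace ℝ (Fin 2)))) := by
    intro i
    show interior (convexHull ℝ ({0, A i, B i} : Set ℂ)) = _
    have h1 : ({0, A i, B i} : Set ℂ) = G '' {v, a i, b i} := by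
      rw [Set.image_insert_eq, Set.image_insert_eq, Set.image_singleton]
      congr 1
      simp [hGdef]
    rw [h1, ← AffineMap.image_convexHull]
    have h2 : G '' (convexHull ℝ ({v, a i, b i} :
        Set (EuclideanSpace ℝ (Fin 2)))) = H '' (convexHull ℝ {v, a i, b i}) := by
      apply Set.image_congr
      intro x _
      exact (hHG x).symm
    rw [h2, H.image_interior]
  have hTdisj : ∀ i j, i ≠ j → Disjoint (T i) (T j) := by
    intro i j hij
    rw [hTim i, hTim j]
    exact (Set.disjoint_image_iff H.injective).mpr (hdisj i j hij)
  -- angles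
  have hangle : ∀ i, ∠ (a i) v (b i) = InnerProductGeometry.angle (A i) (B i) := by
    intro i
    have h1 : ∠ (a i) v (b i) = InnerProductGeometry.angle (a i - v) (b i - v) := rfl
    have h2 : A i = f.toLinearIsometry (a i - v) := by
      simp [hA, hGdef, map_sub, LinearIsometryEquiv.coe_toLinearIsometry]
      abel
    have h3 : B i = f.toLinearIsometry (b i - v) := by
      simp [hB, hGdef, map_sub, LinearIsometryEquiv.coe_toLinearIsometry]
      abel
    rw [h1, h2, h3, LinearIsometry.angle_map]
  -- arcs
  choose D hDmeas hDvol hDray using fun i => key_lemma (hind' i)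
  -- disjointness of arcs
  have hDdisj : Pairwise (Function.onFun Disjoint D) := by
    intro i j hij
    rw [Function.onFun, Set.disjoint_left]
    intro x hxi hxj
    obtain ⟨φ, rfl⟩ := QuotientAddGroup.mk_surjective x
    obtain ⟨εi, hεi, hzi⟩ := hDray i _ hxi φ rfl
    obtain ⟨εj, hεj, hzj⟩ := hDray j _ hxj φ rfl
    set ε := min εi εj with hε
    have hεpos : 0 < ε := lt_min hεi hεj
    have hmem : ∀ (k : ι) (εk : ℝ), 0 < εk → ε ≤ εk →
        εk • Complex.exp (φ * Complex.I) ∈ T k → ε • Complex.exp (φ * Complex.I) ∈ T k := by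
      intro k εk hk hlek hmemk
      exact scale_mem_interior (convex_convexHull ℝ _)
        (subset_convexHull ℝ _ (Set.mem_insert _ _)) hεpos hlek hmemk
    have h1 := hmem i εi hεi (min_le_left _ _) hzi
    have h2 := hmem j εj hεj (min_le_right _ _) hzj
    exact Set.disjoint_left.mp (hTdisj i j hij) h1 h2
  -- measure argument
  have hsum : ∑ i, volume (D i) ≤ ENNReal.ofReal (2 * Real.pi) := by
    have h1 : volume (⋃ i, D i) = ∑' i, volume (D i) := measure_iUnion hDdisj hDmeas
    rw [tsum_fintype] at h1
    rw [← h1, ← AddCircle.measure_univ (T := 2 * Real.pi)]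
    exact measure_mono (Set.subset_univ _)
  have h2 : ENNReal.ofReal (∑ i, ∠ (a i) v (b i)) ≤ ENNReal.ofReal (2 * Real.pi) := by
    rw [ENNReal.ofReal_sum_of_nonneg (fun i _ => angle_nonneg _ _ _)]
    refine le_trans ?_ hsum
    refine Finset.sum_le_sum ?_
    intro i _
    rw [hangle i]
    exact hDvol i
  exact (ENNReal.ofReal_le_ofReal_iff (by positivity)).mp h2
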